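/- Let $X,Y$ be independent with distribution functions $F,G$, suppose $P(X=Y)=0$, $F(x)\le G(x)$ for all $x$, and $p>1$. Then for every measurable $\psi\ge 0$, $E\left[\left(\frac{E(\psi(Y)1_{[Y\le X]}\mid X)}{G(X)}\right)^p\right] \le \left(\frac{p}{p-1}\right)^p E[\psi(Y)^p]$. -/

import Mathlib

open MeasureTheory Set ENNReal

namespace HardySO

noncomputable def Hf (ν : Measure ℝ) (ψ : ℝ → ℝ≥0∞) (x : ℝ) : ℝ≥0∞ := ∫⁻ y in Iic x, ψ y ∂ν

noncomputable def Mf (ν : Measure ℝ) (ψ : ℝ → ℝ≥0∞) (x : ℝ) : ℝ≥0∞ :=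
  ⨆ (x' : ℝ) (_ : x ≤ x'), Hf ν ψ x' / ν (Iic x')

variable (ν : Measure ℝ) (ψ : ℝ → ℝ≥0∞)

lemma R_le_Mf (x : ℝ) : Hf ν ψ x / ν (Iic x) ≤ Mf ν ψ x :=
  le_iSup₂ (f := fun x' (_ : x ≤ x') => Hf ν ψ x' / ν (Iic x')) x le_rfl

lemma Mf_anti : Antitone (Mf ν ψ) := by
  intro a b hab
  refine iSup₂_le fun x' hx' => ?_
  exact le_iSup₂ (f := fun x' (_ : a ≤ x') => Hf ν ψ x' / ν (Iic x')) x' (hab.trans hx')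

lemma Mf_measurable : Measurable (Mf ν ψ) := (Mf_anti ν ψ).measurable

lemma lower_cases {s : Set ℝ} (hs : IsLowerSet s) :
    s = ∅ ∨ s = univ ∨ (∃ c, s = Iic c) ∨ (∃ c, s = Iio c) := by
  rcases eq_empty_or_nonempty s with h | h
  · exact Or.inl h
  by_cases hb : BddAbove s
  · by_cases hc : sSup s ∈ s
    · refine Or.inr (Or.inr (Or.inl ⟨sSup s, ?_⟩))
      ext x
      exact ⟨fun hx => le_csSup hb hx, fun hx => hs hx hc⟩
    · refine Or.inr (Or.inr (Or.inr ⟨sSup s, ?_⟩))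
      ext x
      constructor
      · intro hx
        exact lt_of_le_of_ne (le_csSup hb hx) (by rintro rfl; exact hc hx)
      · intro hx
        obtain ⟨y, hy, hxy⟩ := exists_lt_of_lt_csSup h hx
        exact hs hxy.le hy
  · refine Or.inr (Or.inl ?_)
    ext x
    simp only [mem_univ, iff_true]
    obtain ⟨y, hy, hxy⟩ := not_bddAbove_iff.1 hb x
    exact hs hxy.le hy

lemma measure_Iio_eq (m : Measure ℝ) (c : ℝ) :
    m (Iio c) = ⨆ n : ℕ, m (Iic (c - ((n : ℝ) + 1)⁻¹)) := by
  have hU : Iio c = ⋃ n : ℕ, Iic (c - ((n : ℝ) + 1)⁻¹) := by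
    ext x
    simp only [mem_Iio, mem_iUnion, mem_Iic]
    constructor
    · intro hx
      obtain ⟨n, hn⟩ := exists_nat_one_div_lt (sub_pos.2 hx)
      refine ⟨n, ?_⟩
      rw [one_div] at hn
      linarith
    · intro ⟨n, hn⟩
      have : (0:ℝ) < ((n:ℝ)+1)⁻¹ := by positivity
      linarith
  rw [hU]
  refine Monotone.measure_iUnion fun i j hij => Iic_subset_Iic.2 (by
    have : ((j:ℝ)+1)⁻¹ ≤ ((i:ℝ)+1)⁻¹ := by
      apply inv_anti₀ (by positivity) (by exact_mod_cast by linarith)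
    linarith)

lemma measure_univ_eq (m : Measure ℝ) :
    m univ = ⨆ n : ℕ, m (Iic (n : ℝ)) := by
  have hU : (univ : Set ℝ) = ⋃ n : ℕ, Iic (n : ℝ) := by
    ext x
    simp only [mem_univ, true_iff, mem_iUnion, mem_Iic]
    obtain ⟨n, hn⟩ := exists_nat_ge x
    exact ⟨n, hn⟩
  rw [hU]
  exact Monotone.measure_iUnion fun i j hij => Iic_subset_Iic.2 (by exact_mod_cast hij)


lemma slice_eq (a : ℝ≥0∞) :
    (volume.restrict (Ioi (0:ℝ))) {t : ℝ | ENNReal.ofReal t < a} = a := by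
  have hms : MeasurableSet {t : ℝ | ENNReal.ofReal t < a} :=
    measurable_ofReal measurableSet_Iio
  rw [Measure.restrict_apply hms]
  rcases eq_or_ne a ⊤ with rfl | ha
  · have : {t : ℝ | ENNReal.ofReal t < ⊤} ∩ Ioi 0 = Ioi 0 := by
      ext t; simp [ofReal_lt_top]
    rw [this, Real.volume_Ioi]
  · have : {t : ℝ | ENNReal.ofReal t < a} ∩ Ioi 0 = Ioo 0 a.toReal := by
      ext t
      simp only [mem_inter_iff, mem_setOf_eq, mem_Ioi, mem_Ioo]
      constructor
      · rintro ⟨h1, h2⟩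
        exact ⟨h2, (ofReal_lt_iff_lt_toReal h2.le ha).1 h1⟩
      · rintro ⟨h1, h2⟩
        exact ⟨(ofReal_lt_iff_lt_toReal h1.le ha).2 h2, h1⟩
    rw [this, Real.volume_Ioo, sub_zero, ofReal_toReal ha]

lemma lintegral_eq_layer (m : Measure ℝ) [SFinite m] {φ : ℝ → ℝ≥0∞} (hφ : Measurable φ) :
    ∫⁻ x, φ x ∂m = ∫⁻ t in Ioi (0:ℝ), m {x | ENNReal.ofReal t < φ x} := by
  set A : Set (ℝ × ℝ) := {z : ℝ × ℝ | ENNReal.ofReal z.2 < φ z.1} with hAdef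
  have hA : MeasurableSet A :=
    measurableSet_lt (measurable_ofReal.comp measurable_snd) (hφ.comp measurable_fst)
  set F : ℝ × ℝ → ℝ≥0∞ := A.indicator 1 with hFdef
  have hFm : Measurable F := measurable_const.indicator hA
  have h1 : ∀ x, φ x = ∫⁻ t in Ioi (0:ℝ), F (x, t) := by
    intro x
    have hx : ∀ t : ℝ, F (x, t)
        = ({t' : ℝ | ENNReal.ofReal t' < φ x}).indicator (1 : ℝ → ℝ≥0∞) t := by
      intro t
      by_cases h : ENNReal.ofReal t < φ x <;> simp [hFdef, hAdef, Set.indicator, h]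
    rw [lintegral_congr hx]
    have hms : MeasurableSet {t' : ℝ | ENNReal.ofReal t' < φ x} :=
      measurable_ofReal measurableSet_Iio
    rw [lintegral_indicator_one hms, slice_eq]
  have h2 : ∀ t, (∫⁻ x, F (x, t) ∂m) = m {x | ENNReal.ofReal t < φ x} := by
    intro t
    have hx : ∀ x : ℝ, F (x, t)
        = ({x' : ℝ | ENNReal.ofReal t < φ x'}).indicator (1 : ℝ → ℝ≥0∞) x := by
      intro x
      by_cases h : ENNReal.ofReal t < φ x <;> simp [hFdef, hAdef, Set.indicator, h]
    rw [lintegral_congr hx]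
    exact lintegral_indicator_one (hφ measurableSet_Ioi)
  have huncurry : Function.uncurry (fun x t => F (x, t)) = F := rfl
  have hswap : ∫⁻ x, (∫⁻ t in Ioi (0:ℝ), F (x, t)) ∂m
      = ∫⁻ t in Ioi (0:ℝ), ∫⁻ x, F (x, t) ∂m := by
    refine lintegral_lintegral_swap ?_
    rw [huncurry]
    exact hFm.aemeasurable
  rw [lintegral_congr h1, hswap, lintegral_congr h2]


lemma lintegral_anti_le (μ ν : Measure ℝ) [IsProbabilityMeasure μ] [IsProbabilityMeasure ν]
    (hFG : ∀ x : ℝ, μ (Iic x) ≤ ν (Iic x)) {φ : ℝ → ℝ≥0∞} (hφ : Antitone φ) :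
    ∫⁻ x, φ x ∂μ ≤ ∫⁻ x, φ x ∂ν := by
  rw [lintegral_eq_layer μ hφ.measurable, lintegral_eq_layer ν hφ.measurable]
  refine lintegral_mono fun t => ?_
  have hlow : IsLowerSet {x : ℝ | ENNReal.ofReal t < φ x} :=
    fun a b hba ha => lt_of_lt_of_le ha (hφ hba)
  rcases lower_cases hlow with h | h | ⟨c, h⟩ | ⟨c, h⟩ <;> rw [h]
  · simp
  · simp
  · exact hFG c
  · rw [measure_Iio_eq μ c, measure_Iio_eq ν c]
    exact iSup_mono fun n => hFG _

lemma sunrise (ν : Measure ℝ) [IsProbabilityMeasure ν] (ψ : ℝ → ℝ≥0∞) (lam : ℝ≥0∞) :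
    lam * ν {x | lam < Mf ν ψ x} ≤ ∫⁻ y in {x | lam < Mf ν ψ x}, ψ y ∂ν := by
  set E := {x | lam < Mf ν ψ x} with hE
  have hlowE : IsLowerSet E := fun a b hba ha => lt_of_lt_of_le ha (Mf_anti ν ψ hba)
  have claim : ∀ x ∈ E, lam * ν (Iic x) ≤ ∫⁻ y in E, ψ y ∂ν := by
    intro x hx
    have hlt : lam < Mf ν ψ x := hx
    rw [Mf] at hlt
    rw [lt_iSup_iff] at hlt
    obtain ⟨x', hlt⟩ := hlt
    rw [lt_iSup_iff] at hlt
    obtain ⟨hxx', hR⟩ := hlt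
    have hx'E : x' ∈ E := lt_of_lt_of_le hR (R_le_Mf ν ψ x')
    have h1 : lam * ν (Iic x') ≤ Hf ν ψ x' := by
      rcases eq_or_ne (ν (Iic x')) 0 with h0 | h0
      · simp [h0]
      · exact ((ENNReal.lt_div_iff_mul_lt (Or.inl h0)
          (Or.inl (measure_ne_top ν _))).mp hR).le
    calc lam * ν (Iic x) ≤ lam * ν (Iic x') :=
          mul_le_mul_right (measure_mono (Iic_subset_Iic.2 hxx')) _
      _ ≤ Hf ν ψ x' := h1
      _ ≤ ∫⁻ y in E, ψ y ∂ν :=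
          lintegral_mono_set (fun y (hy : y ≤ x') => hlowE hy hx'E)
  rcases lower_cases hlowE with h | h | ⟨c, h⟩ | ⟨c, h⟩
  · rw [h]; simp
  · have h2 : ν E = ⨆ n : ℕ, ν (Iic (n:ℝ)) := by rw [h]; exact measure_univ_eq ν
    rw [h2, ENNReal.mul_iSup]
    exact iSup_le fun n => claim _ (by rw [h]; trivial)
  · have h2 : ν E = ν (Iic c) := by rw [h]
    rw [h2]
    exact claim c (by rw [h]; exact mem_Iic.2 le_rfl)
  · have h2 : ν E = ⨆ n : ℕ, ν (Iic (c - ((n:ℝ)+1)⁻¹)) := by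
      rw [h]; exact measure_Iio_eq ν c
    rw [h2, ENNReal.mul_iSup]
    refine iSup_le fun n => claim _ ?_
    rw [h]
    have : (0:ℝ) < ((n:ℝ)+1)⁻¹ := by positivity
    exact mem_Iio.2 (by linarith)


lemma iSup_min_rpow (a : ℝ≥0∞) {p : ℝ} (hp : 1 ≤ p) :
    ⨆ n : ℕ, (min a (n:ℝ≥0∞)) ^ p = a ^ p := by
  have hp0 : (0:ℝ) < p := by linarith
  apply le_antisymm
  · exact iSup_le fun n => ENNReal.rpow_le_rpow (min_le_left _ _) hp0.le
  · rcases eq_or_ne a ⊤ with rfl | ha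
    · have h1 : ∀ n : ℕ, ((n:ℝ≥0∞)) ≤ (min ⊤ (n:ℝ≥0∞)) ^ p := by
        intro n
        rw [min_eq_right le_top]
        rcases Nat.eq_zero_or_pos n with rfl | hn
        · simp
        · calc ((n:ℝ≥0∞)) = (n:ℝ≥0∞) ^ (1:ℝ) := (ENNReal.rpow_one _).symm
            _ ≤ (n:ℝ≥0∞) ^ p :=
              ENNReal.rpow_le_rpow_of_exponent_le (by exact_mod_cast hn) hp
      calc (⊤:ℝ≥0∞) ^ p = ⊤ := ENNReal.top_rpow_of_pos hp0
        _ = ⨆ n : ℕ, (n:ℝ≥0∞) := ENNReal.iSup_natCast.symm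
        _ ≤ ⨆ n : ℕ, (min ⊤ (n:ℝ≥0∞)) ^ p := iSup_mono h1
    · obtain ⟨n, hn⟩ := ENNReal.exists_nat_gt ha
      calc a ^ p = (min a (n:ℝ≥0∞)) ^ p := by rw [min_eq_left hn.le]
        _ ≤ ⨆ m : ℕ, (min a (m:ℝ≥0∞)) ^ p := le_iSup (fun m : ℕ => (min a (m:ℝ≥0∞)) ^ p) n


lemma lint_rpow {a r : ℝ} (ha : 0 ≤ a) (hr : -1 < r) :
    ∫⁻ t in Ioo (0:ℝ) a, ENNReal.ofReal (t ^ r) = ENNReal.ofReal (a ^ (r+1) / (r+1)) := by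
  have hr1 : (0:ℝ) < r + 1 := by linarith
  have hint : IntegrableOn (fun t : ℝ => t ^ r) (Ioo 0 a) := by
    have h1 : IntervalIntegrable (fun t : ℝ => t ^ r) volume 0 a :=
      intervalIntegral.intervalIntegrable_rpow' hr
    have h2 := intervalIntegrable_iff.1 h1
    rw [uIoc_of_le ha] at h2
    exact h2.mono_set Ioo_subset_Ioc_self
  have hnn : 0 ≤ᵐ[volume.restrict (Ioo (0:ℝ) a)] fun t : ℝ => t ^ r := by
    filter_upwards [self_mem_ae_restrict measurableSet_Ioo] with t ht
    exact Real.rpow_nonneg ht.1.le r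
  rw [← ofReal_integral_eq_lintegral_ofReal hint hnn]
  congr 1
  rw [← integral_Ioc_eq_integral_Ioo, ← intervalIntegral.integral_of_le ha,
    integral_rpow (Or.inl hr), Real.zero_rpow hr1.ne', sub_zero]

lemma key_n (ν : Measure ℝ) [IsProbabilityMeasure ν] (ψ : ℝ → ℝ≥0∞) (hψ : Measurable ψ)
    (M : ℝ → ℝ≥0∞) (hM : Measurable M) {p : ℝ} (hp : 1 < p) {n : ℕ}
    (hMn : ∀ x, M x ≤ (n : ℝ≥0∞))
    (hsun : ∀ lam : ℝ≥0∞, lam * ν {x | lam < M x} ≤ ∫⁻ y in {x | lam < M x}, ψ y ∂ν) :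
    ∫⁻ x, M x ^ p ∂ν ≤ ENNReal.ofReal ((p / (p - 1)) ^ p) * ∫⁻ y, ψ y ^ p ∂ν := by
  have hp0 : (0:ℝ) < p := by linarith
  have hp1 : (0:ℝ) < p - 1 := by linarith
  set q : ℝ := p / (p - 1) with hq
  have hq0 : (0:ℝ) < q := div_pos hp0 hp1
  have hMtop : ∀ x, M x ≠ ⊤ := fun x => ((hMn x).trans_lt (natCast_lt_top n)).ne
  set f : ℝ → ℝ := fun x => (M x).toReal with hf
  have hfm : Measurable f := hM.ennreal_toReal
  have hfnn : ∀ x, 0 ≤ f x := fun x => toReal_nonneg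
  have hMof : ∀ x, M x = ENNReal.ofReal (f x) := fun x => (ofReal_toReal (hMtop x)).symm
  set A := ∫⁻ x, M x ^ p ∂ν with hA
  set B := ∫⁻ y, ψ y ^ p ∂ν with hBdef
  have hAtop : A ≠ ⊤ := by
    have h1 : A ≤ (n:ℝ≥0∞) ^ p * ν univ := by
      rw [← lintegral_const]
      exact lintegral_mono fun x => ENNReal.rpow_le_rpow (hMn x) hp0.le
    rw [measure_univ, mul_one] at h1
    exact (h1.trans_lt (ENNReal.rpow_lt_top_of_nonneg hp0.le (natCast_ne_top n))).ne
  -- layer cake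
  have lc : A = ENNReal.ofReal p *
      ∫⁻ t in Ioi (0:ℝ), ν {a | t < f a} * ENNReal.ofReal (t ^ (p - 1)) := by
    have h1 : ∀ x, M x ^ p = ENNReal.ofReal (f x ^ p) := by
      intro x; rw [hMof x, ENNReal.ofReal_rpow_of_nonneg (hfnn x) hp0.le]
    rw [hA, lintegral_congr h1]
    exact lintegral_rpow_eq_lintegral_meas_lt_mul ν (ae_of_all _ hfnn) hfm.aemeasurable hp0
  have hEmeas : ∀ lam : ℝ≥0∞, MeasurableSet {x | lam < M x} := fun lam => hM measurableSet_Ioi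
  -- pointwise bound on the t-integrand
  have step : ∀ t ∈ Ioi (0:ℝ), ν {a | t < f a} * ENNReal.ofReal (t ^ (p - 1))
      ≤ (∫⁻ y in {x | ENNReal.ofReal t < M x}, ψ y ∂ν) * ENNReal.ofReal (t ^ (p - 2)) := by
    intro t ht
    have ht0 : (0:ℝ) < t := ht
    have hlam0 : ENNReal.ofReal t ≠ 0 := (ofReal_pos.2 ht0).ne'
    have hlamtop : ENNReal.ofReal t ≠ ⊤ := ofReal_ne_top
    have hset : {a : ℝ | t < f a} = {x | ENNReal.ofReal t < M x} := by
      ext a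
      simp only [mem_setOf_eq]
      rw [ofReal_lt_iff_lt_toReal ht0.le (hMtop a)]
    have h2 : ν {x | ENNReal.ofReal t < M x}
        ≤ (∫⁻ y in {x | ENNReal.ofReal t < M x}, ψ y ∂ν) / ENNReal.ofReal t := by
      rw [ENNReal.le_div_iff_mul_le (Or.inl hlam0) (Or.inl hlamtop), mul_comm]
      exact hsun _
    have h3 : ENNReal.ofReal (t ^ (p - 1)) / ENNReal.ofReal t
        = ENNReal.ofReal (t ^ (p - 2)) := by
      rw [← ENNReal.ofReal_div_of_pos ht0]
      congr 1
      rw [show t ^ (p-1) / t = t ^ (p-1) / t ^ (1:ℝ) by rw [Real.rpow_one],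
        ← Real.rpow_sub ht0]
      congr 1
      ring
    rw [hset]
    calc ν {x | ENNReal.ofReal t < M x} * ENNReal.ofReal (t ^ (p - 1))
        ≤ ((∫⁻ y in {x | ENNReal.ofReal t < M x}, ψ y ∂ν) / ENNReal.ofReal t)
            * ENNReal.ofReal (t ^ (p - 1)) := mul_le_mul_left h2 _
      _ = (∫⁻ y in {x | ENNReal.ofReal t < M x}, ψ y ∂ν) * ENNReal.ofReal (t ^ (p - 2)) := by
          rw [div_eq_mul_inv, ← h3, div_eq_mul_inv, mul_assoc,
            mul_comm (ENNReal.ofReal t)⁻¹ (ENNReal.ofReal (t ^ (p-1)))]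
  -- the joint function for Tonelli
  set W : Set (ℝ × ℝ) := {w : ℝ × ℝ | ENNReal.ofReal w.1 < M w.2} with hW
  have hWm : MeasurableSet W :=
    measurableSet_lt (ENNReal.measurable_ofReal.comp measurable_fst) (hM.comp measurable_snd)
  set Gfun : ℝ × ℝ → ℝ≥0∞ :=
    W.indicator (fun w => ψ w.2 * ENNReal.ofReal (w.1 ^ (p - 2))) with hGdef
  have hGm : Measurable Gfun :=
    ((hψ.comp measurable_snd).mul
      ((measurable_fst.pow measurable_const).ennreal_ofReal)).indicator hWm
  have hGt : ∀ t : ℝ, (∫⁻ y in {x | ENNReal.ofReal t < M x}, ψ y ∂ν)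
      * ENNReal.ofReal (t ^ (p - 2)) = ∫⁻ y, Gfun (t, y) ∂ν := by
    intro t
    have hpt : ∀ y, Gfun (t, y)
        = ({x : ℝ | ENNReal.ofReal t < M x}.indicator
            (fun y' => ψ y' * ENNReal.ofReal (t ^ (p - 2)))) y := by
      intro y
      by_cases h : ENNReal.ofReal t < M y <;>
        simp [hGdef, hW, Set.indicator, h]
    rw [lintegral_congr hpt, lintegral_indicator (hEmeas _),
      lintegral_mul_const _ hψ]
  have hGy : ∀ y : ℝ, (∫⁻ t in Ioi (0:ℝ), Gfun (t, y))
      = ψ y * (M y ^ (p - 1) * ENNReal.ofReal ((p - 1)⁻¹)) := by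
    intro y
    have hs : MeasurableSet {t' : ℝ | ENNReal.ofReal t' < M y} :=
      ENNReal.measurable_ofReal measurableSet_Iio
    have hpt : ∀ t, Gfun (t, y)
        = ({t' : ℝ | ENNReal.ofReal t' < M y}.indicator
            (fun t' => ψ y * ENNReal.ofReal (t' ^ (p - 2)))) t := by
      intro t
      by_cases h : ENNReal.ofReal t < M y <;>
        simp [hGdef, hW, Set.indicator, h]
    rw [lintegral_congr hpt, lintegral_indicator hs, Measure.restrict_restrict hs]
    have hinter : {t' : ℝ | ENNReal.ofReal t' < M y} ∩ Ioi 0 = Ioo 0 (f y) := by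
      ext t
      simp only [mem_inter_iff, mem_setOf_eq, mem_Ioi, mem_Ioo]
      constructor
      · rintro ⟨h1, h2⟩
        exact ⟨h2, (ofReal_lt_iff_lt_toReal h2.le (hMtop y)).1 h1⟩
      · rintro ⟨h1, h2⟩
        exact ⟨(ofReal_lt_iff_lt_toReal h1.le (hMtop y)).2 h2, h1⟩
    have hmeas2 : Measurable fun t : ℝ => ENNReal.ofReal (t ^ (p - 2)) :=
      (measurable_id.pow measurable_const).ennreal_ofReal
    rw [hinter, lintegral_const_mul _ hmeas2]
    congr 1
    have hlr := lint_rpow (hfnn y) (show (-1:ℝ) < p - 2 by linarith)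
    rw [show p - 2 + 1 = p - 1 by ring] at hlr
    rw [hlr, div_eq_mul_inv, ENNReal.ofReal_mul (Real.rpow_nonneg (hfnn y) _),
      ← ENNReal.ofReal_rpow_of_nonneg (hfnn y) (by linarith : (0:ℝ) ≤ p - 1),
      ← hMof y]
  -- putting it together
  have main : A ≤ ENNReal.ofReal q * ∫⁻ y, ψ y * M y ^ (p - 1) ∂ν := by
    calc A = ENNReal.ofReal p *
        ∫⁻ t in Ioi (0:ℝ), ν {a | t < f a} * ENNReal.ofReal (t ^ (p - 1)) := lc
      _ ≤ ENNReal.ofReal p * ∫⁻ t in Ioi (0:ℝ), ∫⁻ y, Gfun (t, y) ∂ν := by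
          refine mul_le_mul_right ?_ _
          refine lintegral_mono_ae ?_
          filter_upwards [self_mem_ae_restrict measurableSet_Ioi] with t ht
          rw [← hGt t]
          exact step t ht
      _ = ENNReal.ofReal p * ∫⁻ y, (∫⁻ t in Ioi (0:ℝ), Gfun (t, y)) ∂ν := by
          congr 1
          exact lintegral_lintegral_swap (hGm.aemeasurable)
      _ = ENNReal.ofReal p * ∫⁻ y, ψ y * (M y ^ (p - 1) * ENNReal.ofReal ((p - 1)⁻¹)) ∂ν := by
          congr 1
          exact lintegral_congr hGy
      _ = ENNReal.ofReal p * ((∫⁻ y, ψ y * M y ^ (p - 1) ∂ν) * ENNReal.ofReal ((p - 1)⁻¹)) := by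
          congr 1
          rw [← lintegral_mul_const' _ _ ofReal_ne_top]
          exact lintegral_congr fun y => by rw [mul_assoc]
      _ = ENNReal.ofReal q * ∫⁻ y, ψ y * M y ^ (p - 1) ∂ν := by
          rw [mul_comm (∫⁻ y, ψ y * M y ^ (p - 1) ∂ν) (ENNReal.ofReal (p - 1)⁻¹),
            ← mul_assoc, ← ENNReal.ofReal_mul hp0.le, ← div_eq_mul_inv, ← hq]
  -- Hölder
  have hpq : p.HolderConjugate q := (Real.holderConjugate_iff_eq_conjExponent hp).2 hq
  have hMp1m : Measurable fun y => M y ^ (p - 1) := hM.pow measurable_const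
  have holder : (∫⁻ y, ψ y * M y ^ (p - 1) ∂ν) ≤ B ^ (1/p) * A ^ (1/q) := by
    have h := ENNReal.lintegral_mul_le_Lp_mul_Lq ν hpq hψ.aemeasurable hMp1m.aemeasurable
    simp only [Pi.mul_apply] at h
    have hqq : ∀ y : ℝ≥0∞, (y ^ (p - 1)) ^ q = y ^ p := by
      intro y
      rw [← ENNReal.rpow_mul]
      congr 1
      rw [hq]
      field_simp
    calc (∫⁻ y, ψ y * M y ^ (p - 1) ∂ν)
        ≤ (∫⁻ a, ψ a ^ p ∂ν) ^ (1/p) * (∫⁻ a, (M a ^ (p - 1)) ^ q ∂ν) ^ (1/q) := h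
      _ = B ^ (1/p) * A ^ (1/q) := by
          rw [← hBdef]
          congr 2
          exact lintegral_congr fun a => hqq (M a)
  -- conclude
  by_cases hA0 : A = 0
  · rw [hA0]
    exact zero_le
  have hAq0 : A ^ (1/q) ≠ 0 := by
    simp [ENNReal.rpow_eq_zero_iff, hA0, hAtop, hq0, not_lt.2 (by positivity : (0:ℝ) ≤ 1/q)]
  have hAqtop : A ^ (1/q) ≠ ⊤ := by
    simp [ENNReal.rpow_eq_top_iff, hA0, hAtop, not_lt.2 (by positivity : (0:ℝ) ≤ 1/q)]
  have hsplit : A = A ^ (1/p) * A ^ (1/q) := by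
    rw [← ENNReal.rpow_add _ _ hA0 hAtop]
    rw [show 1/p + 1/q = 1 by
      have := hpq.inv_add_inv_eq_one
      rw [one_div, one_div]
      exact this]
    exact (ENNReal.rpow_one A).symm
  have hfinal : A ^ (1/p) ≤ ENNReal.ofReal q * B ^ (1/p) := by
    have h1 : A ^ (1/p) * A ^ (1/q) ≤ (ENNReal.ofReal q * B ^ (1/p)) * A ^ (1/q) := by
      rw [← hsplit, mul_assoc]
      exact main.trans (mul_le_mul_right holder _)
    exact (ENNReal.mul_le_mul_iff_left hAq0 hAqtop).1 h1
  have h2 : A ≤ (ENNReal.ofReal q * B ^ (1/p)) ^ p := by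
    have h3 := ENNReal.rpow_le_rpow hfinal hp0.le
    rwa [← ENNReal.rpow_mul, one_div_mul_cancel hp0.ne', ENNReal.rpow_one] at h3
  calc A ≤ (ENNReal.ofReal q * B ^ (1/p)) ^ p := h2
    _ = ENNReal.ofReal (q ^ p) * B := by
        rw [ENNReal.mul_rpow_of_nonneg _ _ hp0.le, ← ENNReal.rpow_mul,
          one_div_mul_cancel hp0.ne', ENNReal.rpow_one,
          ENNReal.ofReal_rpow_of_nonneg hq0.le hp0.le]


lemma core (ν : Measure ℝ) [IsProbabilityMeasure ν] (ψ : ℝ → ℝ≥0∞) (hψ : Measurable ψ)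
    {p : ℝ} (hp : 1 < p) :
    ∫⁻ x, Mf ν ψ x ^ p ∂ν ≤ ENNReal.ofReal ((p / (p - 1)) ^ p) * ∫⁻ y, ψ y ^ p ∂ν := by
  have meas : ∀ n : ℕ, Measurable fun x => (min (Mf ν ψ x) (n:ℝ≥0∞)) ^ p :=
    fun n => ((Mf_measurable ν ψ).min measurable_const).pow measurable_const
  have mono : Monotone (fun n : ℕ => fun x => (min (Mf ν ψ x) (n:ℝ≥0∞)) ^ p) := by
    intro a b hab x
    exact ENNReal.rpow_le_rpow
      (min_le_min le_rfl (by exact_mod_cast hab)) (by linarith)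
  have key : ∀ n : ℕ, ∫⁻ x, (min (Mf ν ψ x) (n:ℝ≥0∞)) ^ p ∂ν
      ≤ ENNReal.ofReal ((p / (p - 1)) ^ p) * ∫⁻ y, ψ y ^ p ∂ν := by
    intro n
    refine key_n ν ψ hψ _ ((Mf_measurable ν ψ).min measurable_const) hp
      (fun x => min_le_right _ _) ?_
    intro lam
    rcases lt_or_ge lam (n:ℝ≥0∞) with hlt | hle
    · have hset : {x | lam < min (Mf ν ψ x) (n:ℝ≥0∞)} = {x | lam < Mf ν ψ x} := by
        ext x; simp [lt_min_iff, hlt]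
      rw [hset]
      exact sunrise ν ψ lam
    · have hset : {x | lam < min (Mf ν ψ x) (n:ℝ≥0∞)} = ∅ := by
        ext x
        simp only [mem_setOf_eq, mem_empty_iff_false, iff_false, not_lt]
        exact (min_le_right _ _).trans hle
      rw [hset]
      simp
  calc ∫⁻ x, Mf ν ψ x ^ p ∂ν
      = ∫⁻ x, ⨆ n : ℕ, (min (Mf ν ψ x) (n:ℝ≥0∞)) ^ p ∂ν :=
        lintegral_congr fun x => (iSup_min_rpow _ hp.le).symm
    _ = ⨆ n : ℕ, ∫⁻ x, (min (Mf ν ψ x) (n:ℝ≥0∞)) ^ p ∂ν := lintegral_iSup meas mono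
    _ ≤ ENNReal.ofReal ((p / (p - 1)) ^ p) * ∫⁻ y, ψ y ^ p ∂ν := iSup_le key

end HardySO

open HardySO in
/-- Hardy-type inequality under stochastic ordering: `X ∼ μ`, `Y ∼ ν` are
independent with distribution functions `F`, `G`, `P(X = Y) = 0`, and
`F ≤ G` pointwise (i.e. `Y ⪯ X`). The ratio is `0` when `G(X) = 0`. -/
theorem hardy_stochastic_ordering (μ ν : Measure ℝ)
    [IsProbabilityMeasure μ] [IsProbabilityMeasure ν]
    (hne : (μ.prod ν) {z : ℝ × ℝ | z.1 = z.2} = 0)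
    (hFG : ∀ x : ℝ, μ (Iic x) ≤ ν (Iic x))
    (p : ℝ) (hp : 1 < p) (ψ : ℝ → ℝ≥0∞) (hψ : Measurable ψ) :
    ∫⁻ x, ((∫⁻ y in Iic x, ψ y ∂ν) / ν (Iic x)) ^ p ∂μ
      ≤ ENNReal.ofReal ((p / (p - 1)) ^ p) * ∫⁻ y, ψ y ^ p ∂ν := by
  have h1 : ∀ x : ℝ, ((∫⁻ y in Iic x, ψ y ∂ν) / ν (Iic x)) ^ p ≤ Mf ν ψ x ^ p :=
    fun x => ENNReal.rpow_le_rpow (R_le_Mf ν ψ x) (by linarith)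
  have hanti : Antitone fun x => Mf ν ψ x ^ p :=
    fun a b hab => ENNReal.rpow_le_rpow (Mf_anti ν ψ hab) (by linarith)
  calc ∫⁻ x, ((∫⁻ y in Iic x, ψ y ∂ν) / ν (Iic x)) ^ p ∂μ
      ≤ ∫⁻ x, Mf ν ψ x ^ p ∂μ := lintegral_mono h1
    _ ≤ ∫⁻ x, Mf ν ψ x ^ p ∂ν := lintegral_anti_le μ ν hFG hanti
    _ ≤ ENNReal.ofReal ((p / (p - 1)) ^ p) * ∫⁻ y, ψ y ^ p ∂ν := core ν ψ hψ hp
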